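/- arXiv:2205.13031 — 10 statements merged into one kernel-verified Lean document; each statement's English description precedes it below -/
import Mathlib

section
/- Let φ : (A, ∂_A, F_A) → (B, ∂_B, F_B) be an mfDGA morphism over F = ZMod 2 (a DGA morphism with φ(F_A ℓ) ⊆ F_B ℓ for all ℓ). Then τ(B,∂_B,F_B) ≤ τ(A,∂_A,F_A): for each ℓ, 1 ∈ ∂_A '' (F_A ℓ) implies 1 ∈ ∂_B '' (F_B ℓ), hence sSup {ℓ | 1 ∉ ∂_B '' (F_B ℓ)} ≤ sSup {ℓ | 1 ∉ ∂_A '' (F_A ℓ)} in ℕ∞. -/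
/-- An mfDGA morphism `φ : (A, dA, FA) → (B, dB, FB)` over `F = ZMod 2`
satisfies `τ(B) ≤ τ(A)`: exactness of the unit in `FA ℓ` is pushed forward to `FB ℓ`,
hence `sSup {ℓ | 1 ∉ dB '' (FB ℓ)} ≤ sSup {ℓ | 1 ∉ dA '' (FA ℓ)}` in `ℕ∞`. -/
theorem stmt_5 {A B : Type*} [Ring A] [Algebra (ZMod 2) A] [Ring B] [Algebra (ZMod 2) B]
    (dA : A →ₗ[ZMod 2] A) (dB : B →ₗ[ZMod 2] B)
    (hleibA : ∀ x y : A, dA (x * y) = dA x * y + x * dA y)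
    (honeA : dA 1 = 0) (hsqA : ∀ x : A, dA (dA x) = 0)
    (hleibB : ∀ x y : B, dB (x * y) = dB x * y + x * dB y)
    (honeB : dB 1 = 0) (hsqB : ∀ x : B, dB (dB x) = 0)
    (FA : ℕ → Subalgebra (ZMod 2) A) (FB : ℕ → Subalgebra (ZMod 2) B)
    (hmonoA : Monotone FA) (hmonoB : Monotone FB)
    (hpresA : ∀ ℓ : ℕ, ∀ x ∈ FA ℓ, dA x ∈ FA ℓ)
    (hpresB : ∀ ℓ : ℕ, ∀ x ∈ FB ℓ, dB x ∈ FB ℓ)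
    (φ : A →ₐ[ZMod 2] B)
    (hchain : ∀ x : A, φ (dA x) = dB (φ x))
    (hfilt : ∀ ℓ : ℕ, ∀ x ∈ FA ℓ, φ x ∈ FB ℓ) :
    (∀ ℓ : ℕ, (1 : A) ∈ dA '' (FA ℓ : Set A) → (1 : B) ∈ dB '' (FB ℓ : Set B)) ∧
      sSup ((fun ℓ : ℕ => (ℓ : ℕ∞)) '' {ℓ : ℕ | (1 : B) ∉ dB '' (FB ℓ : Set B)}) ≤
        sSup ((fun ℓ : ℕ => (ℓ : ℕ∞)) '' {ℓ : ℕ | (1 : A) ∉ dA '' (FA ℓ : Set A)}) := by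
  have key : ∀ ℓ : ℕ, (1 : A) ∈ dA '' (FA ℓ : Set A) → (1 : B) ∈ dB '' (FB ℓ : Set B) := by
    rintro ℓ ⟨x, hx, hdx⟩
    exact ⟨φ x, hfilt ℓ x hx, by rw [← hchain, hdx, map_one]⟩
  refine ⟨key, sSup_le_sSup (Set.image_mono ?_)⟩
  intro ℓ hℓ hA
  exact hℓ (key ℓ hA)
end

section
/- If there exist mfDGA morphisms φ : (A, ∂_A, F_A) → (B, ∂_B, F_B) and ψ : (B, ∂_B, F_B) → (A, ∂_A, F_A) over F = ZMod 2 (in particular, if the two mfDGAs are chain homotopy equivalent), then τ(A,∂_A,F_A) = τ(B,∂_B,F_B) and τ_Aug(A,∂_A,F_A) = τ_Aug(B,∂_B,F_B): for each ℓ, 1 ∈ ∂_A '' (F_A ℓ) holds if and only if 1 ∈ ∂_B '' (F_B ℓ), and (F_A ℓ, ∂_A) admits an augmentation if and only if (F_B ℓ, ∂_B) does. -/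
/-- The sub-DGA `(S, d)` of `(A, d)` admits an augmentation: a unital `ZMod 2`-algebra
homomorphism `ε : S → ZMod 2` annihilating the differential. -/
def IsAugOn {A : Type*} [Ring A] [Algebra (ZMod 2) A]
    (d : A →ₗ[ZMod 2] A) (S : Subalgebra (ZMod 2) A) : Prop :=
  ∃ ε : S →ₐ[ZMod 2] ZMod 2, ∀ (x : S) (h : d (x : A) ∈ S), ε ⟨d (x : A), h⟩ = 0

lemma one_transfer {A B : Type*} [Ring A] [Algebra (ZMod 2) A] [Ring B] [Algebra (ZMod 2) B]
    (dA : A →ₗ[ZMod 2] A) (dB : B →ₗ[ZMod 2] B)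
    (SA : Subalgebra (ZMod 2) A) (SB : Subalgebra (ZMod 2) B)
    (φ : A →ₐ[ZMod 2] B)
    (hchainφ : ∀ x : A, φ (dA x) = dB (φ x))
    (hfiltφ : ∀ x ∈ SA, φ x ∈ SB)
    (h : (1 : A) ∈ dA '' (SA : Set A)) : (1 : B) ∈ dB '' (SB : Set B) := by
  obtain ⟨x, hx, hdx⟩ := h
  exact ⟨φ x, hfiltφ x hx, by rw [← hchainφ, hdx, map_one]⟩

lemma aug_transfer {A B : Type*} [Ring A] [Algebra (ZMod 2) A] [Ring B] [Algebra (ZMod 2) B]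
    (dA : A →ₗ[ZMod 2] A) (dB : B →ₗ[ZMod 2] B)
    (SA : Subalgebra (ZMod 2) A) (SB : Subalgebra (ZMod 2) B)
    (φ : A →ₐ[ZMod 2] B)
    (hchainφ : ∀ x : A, φ (dA x) = dB (φ x))
    (hfiltφ : ∀ x ∈ SA, φ x ∈ SB)
    (hpresB : ∀ y ∈ SB, dB y ∈ SB)
    (h : IsAugOn dB SB) : IsAugOn dA SA := by
  obtain ⟨ε, hε⟩ := h
  refine ⟨ε.comp (AlgHom.codRestrict (φ.comp SA.val) SB (fun x => hfiltφ x x.2)), ?_⟩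
  intro x h
  have : (AlgHom.codRestrict (φ.comp SA.val) SB (fun x => hfiltφ x x.2))
      ⟨dA (x : A), h⟩ = ⟨dB (φ (x : A)), hpresB _ (hfiltφ x x.2)⟩ := by
    ext
    exact hchainφ (x : A)
  simp only [AlgHom.comp_apply, this]
  exact hε ⟨φ (x : A), hfiltφ x x.2⟩ _

/-- If there are mfDGA morphisms in both directions between
`(A, dA, FA)` and `(B, dB, FB)` over `F = ZMod 2` (in particular, if they are chain
homotopy equivalent), then the torsions and the algebraic torsions agree. -/
theorem stmt_7 {A B : Type*} [Ring A] [Algebra (ZMod 2) A] [Ring B] [Algebra (ZMod 2) B]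
    (dA : A →ₗ[ZMod 2] A) (dB : B →ₗ[ZMod 2] B)
    (hleibA : ∀ x y : A, dA (x * y) = dA x * y + x * dA y)
    (honeA : dA 1 = 0) (hsqA : ∀ x : A, dA (dA x) = 0)
    (hleibB : ∀ x y : B, dB (x * y) = dB x * y + x * dB y)
    (honeB : dB 1 = 0) (hsqB : ∀ x : B, dB (dB x) = 0)
    (FA : ℕ → Subalgebra (ZMod 2) A) (FB : ℕ → Subalgebra (ZMod 2) B)
    (hmonoA : Monotone FA) (hmonoB : Monotone FB)
    (hpresA : ∀ ℓ : ℕ, ∀ x ∈ FA ℓ, dA x ∈ FA ℓ)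
    (hpresB : ∀ ℓ : ℕ, ∀ x ∈ FB ℓ, dB x ∈ FB ℓ)
    (φ : A →ₐ[ZMod 2] B) (ψ : B →ₐ[ZMod 2] A)
    (hchainφ : ∀ x : A, φ (dA x) = dB (φ x))
    (hchainψ : ∀ y : B, ψ (dB y) = dA (ψ y))
    (hfiltφ : ∀ ℓ : ℕ, ∀ x ∈ FA ℓ, φ x ∈ FB ℓ)
    (hfiltψ : ∀ ℓ : ℕ, ∀ y ∈ FB ℓ, ψ y ∈ FA ℓ) :
    (∀ ℓ : ℕ,
      ((1 : A) ∈ dA '' (FA ℓ : Set A) ↔ (1 : B) ∈ dB '' (FB ℓ : Set B)) ∧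
      (IsAugOn dA (FA ℓ) ↔ IsAugOn dB (FB ℓ))) ∧
      sSup ((fun ℓ : ℕ => (ℓ : ℕ∞)) '' {ℓ : ℕ | (1 : A) ∉ dA '' (FA ℓ : Set A)}) =
        sSup ((fun ℓ : ℕ => (ℓ : ℕ∞)) '' {ℓ : ℕ | (1 : B) ∉ dB '' (FB ℓ : Set B)}) ∧
      sSup ((fun ℓ : ℕ => (ℓ : ℕ∞)) '' {ℓ : ℕ | IsAugOn dA (FA ℓ)}) =
        sSup ((fun ℓ : ℕ => (ℓ : ℕ∞)) '' {ℓ : ℕ | IsAugOn dB (FB ℓ)}) := by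
  have key : ∀ ℓ : ℕ,
      ((1 : A) ∈ dA '' (FA ℓ : Set A) ↔ (1 : B) ∈ dB '' (FB ℓ : Set B)) ∧
      (IsAugOn dA (FA ℓ) ↔ IsAugOn dB (FB ℓ)) := by
    intro ℓ
    constructor
    · exact ⟨one_transfer dA dB (FA ℓ) (FB ℓ) φ hchainφ (hfiltφ ℓ),
        one_transfer dB dA (FB ℓ) (FA ℓ) ψ hchainψ (hfiltψ ℓ)⟩
    · exact ⟨fun h => aug_transfer dB dA (FB ℓ) (FA ℓ) ψ hchainψ (hfiltψ ℓ) (hpresA ℓ) h,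
        fun h => aug_transfer dA dB (FA ℓ) (FB ℓ) φ hchainφ (hfiltφ ℓ) (hpresB ℓ) h⟩
  refine ⟨key, ?_, ?_⟩
  · congr 1
    ext x
    simp only [Set.mem_image, Set.mem_setOf_eq]
    exact ⟨fun ⟨ℓ, h, he⟩ => ⟨ℓ, fun hh => h ((key ℓ).1.2 hh), he⟩,
      fun ⟨ℓ, h, he⟩ => ⟨ℓ, fun hh => h ((key ℓ).1.1 hh), he⟩⟩
  · congr 1
    ext x
    simp only [Set.mem_image, Set.mem_setOf_eq]
    exact ⟨fun ⟨ℓ, h, he⟩ => ⟨ℓ, (key ℓ).2.1 h, he⟩,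
      fun ⟨ℓ, h, he⟩ => ⟨ℓ, (key ℓ).2.2 h, he⟩⟩
end

section
/- Let (A, ∂) be the tensor algebra A = TensorAlgebra F V over F = ZMod 2 with a differential ∂, let ε_l, ε_r be augmentations of (A, ∂), and let ρ be a bilinearization projection for (ε_l, ε_r). Then ρ ∘ ∂ = ∂bl ∘ ρ as F-linear maps A → V, where ∂bl := ρ ∘ ∂ ∘ ι : V → V is the bilinearized differential. -/
/-- For a differential `d` on the tensor algebra over `F = ZMod 2`,
augmentations `εl, εr`, and a bilinearization projection `ρ`, one has
`ρ ∘ d = ∂bl ∘ ρ` where `∂bl = ρ ∘ d ∘ ι` is the bilinearized differential. -/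
theorem stmt_11 {V : Type*} [AddCommGroup V] [Module (ZMod 2) V]
    (d : TensorAlgebra (ZMod 2) V →ₗ[ZMod 2] TensorAlgebra (ZMod 2) V)
    (hleib : ∀ x y : TensorAlgebra (ZMod 2) V, d (x * y) = d x * y + x * d y)
    (hone : d 1 = 0) (hsq : ∀ x, d (d x) = 0)
    (εl εr : TensorAlgebra (ZMod 2) V →ₐ[ZMod 2] ZMod 2)
    (haugl : ∀ x, εl (d x) = 0) (haugr : ∀ x, εr (d x) = 0)
    (ρ : TensorAlgebra (ZMod 2) V →ₗ[ZMod 2] V)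
    (hρ1 : ρ 1 = 0) (hρι : ∀ v : V, ρ (TensorAlgebra.ι (ZMod 2) v) = v)
    (hρmul : ∀ x y : TensorAlgebra (ZMod 2) V, ρ (x * y) = εl x • ρ y + εr y • ρ x) :
    ∀ x : TensorAlgebra (ZMod 2) V,
      ρ (d x) = ρ (d (TensorAlgebra.ι (ZMod 2) (ρ x))) := by
  intro x
  induction x using TensorAlgebra.induction with
  | algebraMap r =>
      have h1 : (algebraMap (ZMod 2) (TensorAlgebra (ZMod 2) V)) r = r • 1 := by
        simp [Algebra.algebraMap_eq_smul_one]
      simp [h1, hone, hρ1]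
  | ι v => rw [hρι]
  | mul x y ihx ihy =>
      rw [hleib, map_add, hρmul, hρmul, haugl, haugr, zero_smul, zero_smul,
        add_zero, zero_add, hρmul, map_add, map_smul, map_smul, map_add,
        map_smul, map_smul, map_add, map_smul, map_smul, ihx, ihy]
      abel
  | add x y ihx ihy =>
      rw [map_add, map_add, map_add, map_add, map_add, ihx, ihy, map_add]
end

section
/- Let (A, ∂) be the tensor algebra A = TensorAlgebra F V over F = ZMod 2 with a differential ∂, let ε_l, ε_r be augmentations of (A, ∂), and let ρ be a bilinearization projection for (ε_l, ε_r). Then the bilinearized differential squares to zero: ∂bl ∘ ∂bl = 0, where ∂bl := ρ ∘ ∂ ∘ ι : V → V. Hence (V, ∂bl) is a chain complex (the bilinearized chain complex). -/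
/-- The bilinearized differential `∂bl = ρ ∘ d ∘ ι : V → V` squares to
zero, so `(V, ∂bl)` is a chain complex (the bilinearized chain complex). -/
theorem stmt_12 {V : Type*} [AddCommGroup V] [Module (ZMod 2) V]
    (d : TensorAlgebra (ZMod 2) V →ₗ[ZMod 2] TensorAlgebra (ZMod 2) V)
    (hleib : ∀ x y : TensorAlgebra (ZMod 2) V, d (x * y) = d x * y + x * d y)
    (hone : d 1 = 0) (hsq : ∀ x, d (d x) = 0)
    (εl εr : TensorAlgebra (ZMod 2) V →ₐ[ZMod 2] ZMod 2)
    (haugl : ∀ x, εl (d x) = 0) (haugr : ∀ x, εr (d x) = 0)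
    (ρ : TensorAlgebra (ZMod 2) V →ₗ[ZMod 2] V)
    (hρ1 : ρ 1 = 0) (hρι : ∀ v : V, ρ (TensorAlgebra.ι (ZMod 2) v) = v)
    (hρmul : ∀ x y : TensorAlgebra (ZMod 2) V, ρ (x * y) = εl x • ρ y + εr y • ρ x) :
    ∀ v : V,
      ρ (d (TensorAlgebra.ι (ZMod 2) (ρ (d (TensorAlgebra.ι (ZMod 2) v))))) = 0 := by
  -- key: for all x, ρ (d (ι (ρ x))) = ρ (d x)
  have key : ∀ x : TensorAlgebra (ZMod 2) V,
      ρ (d (TensorAlgebra.ι (ZMod 2) (ρ x))) = ρ (d x) := by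
    intro x
    induction x using TensorAlgebra.induction with
    | algebraMap r =>
      simp [Algebra.algebraMap_eq_smul_one, hone, hρ1]
    | ι v => rw [hρι]
    | mul x y hx hy =>
      rw [hρmul, map_add, map_smul, map_smul, map_add, map_smul, map_smul,
        map_add, map_smul, map_smul, hx, hy, hleib, map_add, hρmul, hρmul,
        haugl, haugr, zero_smul, zero_smul, zero_add, add_zero, add_comm]
    | add x y hx hy =>
      simp only [map_add, hx, hy]
  intro v
  rw [key, hsq, map_zero]
end

section
/- Let F = ZMod 2, A = TensorAlgebra F V with inclusion ι, ε_l, ε_r : A → F unital F-algebra homomorphisms, and ρ a bilinearization projection for (ε_l, ε_r). Define the counit c : V → F by c(v) = ε_l(ι v) + ε_r(ι v). Then c(ρ(x)) = ε_l(x) + ε_r(x) for every x ∈ A (in characteristic 2, the counit composed with the bilinearization projection recovers ε_l − ε_r). -/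
/-- With `c : V → F`, `c v = εl (ι v) + εr (ι v)` (the counit), the
bilinearization projection satisfies `c (ρ x) = εl x + εr x` for all `x`
(in characteristic 2 this is `εl − εr`). -/
theorem stmt_13 {V : Type*} [AddCommGroup V] [Module (ZMod 2) V]
    (εl εr : TensorAlgebra (ZMod 2) V →ₐ[ZMod 2] ZMod 2)
    (ρ : TensorAlgebra (ZMod 2) V →ₗ[ZMod 2] V)
    (hρ1 : ρ 1 = 0) (hρι : ∀ v : V, ρ (TensorAlgebra.ι (ZMod 2) v) = v)
    (hρmul : ∀ x y : TensorAlgebra (ZMod 2) V, ρ (x * y) = εl x • ρ y + εr y • ρ x) :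
    ∀ x : TensorAlgebra (ZMod 2) V,
      εl (TensorAlgebra.ι (ZMod 2) (ρ x)) + εr (TensorAlgebra.ι (ZMod 2) (ρ x)) =
        εl x + εr x := by
  intro x
  induction x using TensorAlgebra.induction with
  | algebraMap r =>
    have : ρ (algebraMap (ZMod 2) _ r) = 0 := by
      have := map_smul ρ r 1
      simpa [hρ1, Algebra.algebraMap_eq_smul_one] using this
    simp [this]
    exact (CharTwo.add_self_eq_zero r).symm
  | ι v => rw [hρι]
  | mul x y hx hy =>
    rw [hρmul]
    simp only [map_add, map_smul, map_mul, smul_eq_mul]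
    have h2 : ∀ a : ZMod 2, a + a = 0 := by decide
    linear_combination εl x * hy + εr y * hx + h2 (εl x * εr y)
  | add x y hx hy =>
    simp only [map_add]
    linear_combination hx + hy
end

section
/- Let (A, ∂) be the tensor algebra A = TensorAlgebra F V over F = ZMod 2 with a differential ∂, let ε_l, ε_r be augmentations of (A, ∂), let ρ be a bilinearization projection for (ε_l, ε_r), and let ∂bl := ρ ∘ ∂ ∘ ι. Define the counit c : V → F by c(v) = ε_l(ι v) + ε_r(ι v). Then c ∘ ∂bl = 0; that is, the counit ε_l − ε_r is a chain map from the bilinearized chain complex (V, ∂bl) to F, and so descends to the fundamental class on bilinearized homology. -/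
/-- The counit `c v = εl (ι v) + εr (ι v)` satisfies `c ∘ ∂bl = 0`
where `∂bl = ρ ∘ d ∘ ι`; i.e. `εl − εr` is a chain map from the bilinearized chain
complex `(V, ∂bl)` to `F`, descending to the fundamental class on homology. -/
theorem stmt_14 {V : Type*} [AddCommGroup V] [Module (ZMod 2) V]
    (d : TensorAlgebra (ZMod 2) V →ₗ[ZMod 2] TensorAlgebra (ZMod 2) V)
    (hleib : ∀ x y : TensorAlgebra (ZMod 2) V, d (x * y) = d x * y + x * d y)
    (hone : d 1 = 0) (hsq : ∀ x, d (d x) = 0)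
    (εl εr : TensorAlgebra (ZMod 2) V →ₐ[ZMod 2] ZMod 2)
    (haugl : ∀ x, εl (d x) = 0) (haugr : ∀ x, εr (d x) = 0)
    (ρ : TensorAlgebra (ZMod 2) V →ₗ[ZMod 2] V)
    (hρ1 : ρ 1 = 0) (hρι : ∀ v : V, ρ (TensorAlgebra.ι (ZMod 2) v) = v)
    (hρmul : ∀ x y : TensorAlgebra (ZMod 2) V, ρ (x * y) = εl x • ρ y + εr y • ρ x) :
    ∀ v : V,
      εl (TensorAlgebra.ι (ZMod 2) (ρ (d (TensorAlgebra.ι (ZMod 2) v)))) +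
        εr (TensorAlgebra.ι (ZMod 2) (ρ (d (TensorAlgebra.ι (ZMod 2) v)))) = 0 := by
  have key : ∀ x : TensorAlgebra (ZMod 2) V,
      εl (TensorAlgebra.ι (ZMod 2) (ρ x)) + εr (TensorAlgebra.ι (ZMod 2) (ρ x))
        = εl x + εr x := by
    intro x
    induction x using TensorAlgebra.induction with
    | algebraMap r =>
      have : ρ (algebraMap (ZMod 2) (TensorAlgebra (ZMod 2) V) r) = 0 := by
        rw [Algebra.algebraMap_eq_smul_one, map_smul, hρ1, smul_zero]
      rw [this]
      simp only [map_zero, AlgHom.commutes, Algebra.algebraMap_self_apply]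
      have h2 : (2 : ZMod 2) = 0 := rfl
      linear_combination -r * h2
    | ι v => rw [hρι]
    | mul x y hx hy =>
      rw [hρmul, map_add, map_smul, map_smul, map_add, map_add, map_smul, map_smul,
        map_smul, map_smul, map_mul, map_mul]
      simp only [smul_eq_mul]
      have h2 : (2 : ZMod 2) = 0 := rfl
      linear_combination εl x * hy + εr y * hx + (εl x * εr y) * h2
    | add x y hx hy =>
      simp only [map_add]
      linear_combination hx + hy
  intro v
  rw [key (d (TensorAlgebra.ι (ZMod 2) v)), haugl, haugr, add_zero]
end

section
/- Let (A, ∂) be the tensor algebra A = TensorAlgebra F V over F = ZMod 2 with a differential ∂, ε_l, ε_r augmentations of (A, ∂), ρ a bilinearization projection for (ε_l, ε_r), and ∂bl := ρ ∘ ∂ ∘ ι. Let W ⊆ V be an F-submodule and let F_W := Algebra.adjoin F (ι '' W) be the subalgebra of A generated by ι(W). If ∂(F_W) ⊆ F_W, then ρ(F_W) ⊆ W and ∂bl(W) ⊆ W. (The bilinearized differential preserves any filtration preserved by ∂; the bilinearized chain complex of an mfDGA is a filtered complex.) -/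
/-- Let `W ⊆ V` be a submodule and `FW = Algebra.adjoin F (ι '' W)` the
subalgebra of the tensor algebra generated by `ι(W)`. If the differential `d`
preserves `FW`, then the bilinearization projection `ρ` maps `FW` into `W` and the
bilinearized differential `∂bl = ρ ∘ d ∘ ι` maps `W` into `W`. -/
theorem stmt_15 {V : Type*} [AddCommGroup V] [Module (ZMod 2) V]
    (d : TensorAlgebra (ZMod 2) V →ₗ[ZMod 2] TensorAlgebra (ZMod 2) V)
    (hleib : ∀ x y : TensorAlgebra (ZMod 2) V, d (x * y) = d x * y + x * d y)
    (hone : d 1 = 0) (hsq : ∀ x, d (d x) = 0)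
    (εl εr : TensorAlgebra (ZMod 2) V →ₐ[ZMod 2] ZMod 2)
    (haugl : ∀ x, εl (d x) = 0) (haugr : ∀ x, εr (d x) = 0)
    (ρ : TensorAlgebra (ZMod 2) V →ₗ[ZMod 2] V)
    (hρ1 : ρ 1 = 0) (hρι : ∀ v : V, ρ (TensorAlgebra.ι (ZMod 2) v) = v)
    (hρmul : ∀ x y : TensorAlgebra (ZMod 2) V, ρ (x * y) = εl x • ρ y + εr y • ρ x)
    (W : Submodule (ZMod 2) V)
    (FW : Subalgebra (ZMod 2) (TensorAlgebra (ZMod 2) V))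
    (hFW : FW = Algebra.adjoin (ZMod 2) (TensorAlgebra.ι (ZMod 2) '' (W : Set V)))
    (hdFW : ∀ x ∈ FW, d x ∈ FW) :
    (∀ x ∈ FW, ρ x ∈ W) ∧
      (∀ w ∈ W, ρ (d (TensorAlgebra.ι (ZMod 2) w)) ∈ W) := by
  have key : ∀ x ∈ FW, ρ x ∈ W := by
    intro x hx
    rw [hFW] at hx
    induction hx using Algebra.adjoin_induction with
    | mem v hv =>
      obtain ⟨w, hw, rfl⟩ := hv
      rw [hρι]; exact hw
    | algebraMap r =>
      have : (algebraMap (ZMod 2) (TensorAlgebra (ZMod 2) V)) r = r • 1 :=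
        Algebra.algebraMap_eq_smul_one r
      rw [this, map_smul, hρ1, smul_zero]; exact W.zero_mem
    | add x y _ _ hx hy =>
      rw [map_add]; exact W.add_mem hx hy
    | mul x y _ _ hx hy =>
      rw [hρmul]; exact W.add_mem (W.smul_mem _ hy) (W.smul_mem _ hx)
  refine ⟨key, fun w hw => ?_⟩
  apply key
  apply hdFW
  rw [hFW]
  exact Algebra.subset_adjoin ⟨w, hw, rfl⟩
end

section
/- Let (A, ∂) be the tensor algebra A = TensorAlgebra F V over F = ZMod 2 with a differential ∂, ε_l, ε_r augmentations of (A, ∂), ρ a bilinearization projection for (ε_l, ε_r), and ∂bl := ρ ∘ ∂ ∘ ι. Suppose ε_l and ε_r are DGA chain homotopic: there is an F-linear map h : A → F with h(1) = 0, h(x*y) = ε_l(x)·h(y) + h(x)·ε_r(y) for all x, y ∈ A, and ε_l(x) + ε_r(x) = h(∂x) for all x ∈ A. Then the counit c : V → F, c(v) = ε_l(ι v) + ε_r(ι v), is a coboundary for the bilinearized differential: c = (h ∘ ι) ∘ ∂bl. In particular the fundamental class of the pair (ε_l, ε_r) vanishes on bilinearized homology. -/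
/-- If the augmentations `εl, εr` of `(TensorAlgebra F V, d)` are DGA
chain homotopic via `h` (with `h 1 = 0`, `h (x*y) = εl x * h y + h x * εr y` and
`εl x + εr x = h (d x)`), then the counit `c v = εl (ι v) + εr (ι v)` is the
coboundary `(h ∘ ι) ∘ ∂bl` for the bilinearized differential `∂bl = ρ ∘ d ∘ ι`.
In particular the fundamental class of `(εl, εr)` vanishes on bilinearized homology. -/
theorem stmt_16 {V : Type*} [AddCommGroup V] [Module (ZMod 2) V]
    (d : TensorAlgebra (ZMod 2) V →ₗ[ZMod 2] TensorAlgebra (ZMod 2) V)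
    (hleib : ∀ x y : TensorAlgebra (ZMod 2) V, d (x * y) = d x * y + x * d y)
    (hone : d 1 = 0) (hsq : ∀ x, d (d x) = 0)
    (εl εr : TensorAlgebra (ZMod 2) V →ₐ[ZMod 2] ZMod 2)
    (haugl : ∀ x, εl (d x) = 0) (haugr : ∀ x, εr (d x) = 0)
    (ρ : TensorAlgebra (ZMod 2) V →ₗ[ZMod 2] V)
    (hρ1 : ρ 1 = 0) (hρι : ∀ v : V, ρ (TensorAlgebra.ι (ZMod 2) v) = v)
    (hρmul : ∀ x y : TensorAlgebra (ZMod 2) V, ρ (x * y) = εl x • ρ y + εr y • ρ x)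
    (h : TensorAlgebra (ZMod 2) V →ₗ[ZMod 2] ZMod 2)
    (hh1 : h 1 = 0)
    (hhmul : ∀ x y : TensorAlgebra (ZMod 2) V, h (x * y) = εl x * h y + h x * εr y)
    (hhtp : ∀ x : TensorAlgebra (ZMod 2) V, εl x + εr x = h (d x)) :
    ∀ v : V,
      εl (TensorAlgebra.ι (ZMod 2) v) + εr (TensorAlgebra.ι (ZMod 2) v) =
        h (TensorAlgebra.ι (ZMod 2) (ρ (d (TensorAlgebra.ι (ZMod 2) v)))) := by
  have key : ∀ a : TensorAlgebra (ZMod 2) V,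
      h a = h (TensorAlgebra.ι (ZMod 2) (ρ a)) := by
    intro a
    induction a using TensorAlgebra.induction with
    | algebraMap r =>
        have h1 : (algebraMap (ZMod 2) (TensorAlgebra (ZMod 2) V)) r = r • 1 := by
          rw [Algebra.algebraMap_eq_smul_one]
        simp [h1, hρ1, hh1]
    | ι v => rw [hρι]
    | mul x y hx hy =>
        rw [hhmul, hρmul, map_add, map_add, map_smul, map_smul, map_smul, map_smul,
          ← hx, ← hy]
        ring_nf
    | add x y hx hy => rw [map_add, map_add, map_add, map_add, hx, hy]
  intro v
  rw [hhtp, key]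
end

section
/- In the stabilization setup over F = ZMod 2 (with A = TensorAlgebra F V, B = TensorAlgebra F (V × F × F), e₁ = ι_W(0,1,0), e₂ = ι_W(0,0,1), inc : A → B the algebra homomorphism with inc(ι_V v) = ι_W(v,0,0), and differentials ∂_A, ∂_B satisfying the Leibniz rule and killing 1, with ∂_B(ι_W(v,0,0)) = inc(∂_A(ι_V v)) for all v, ∂_B(e₁) = e₂, ∂_B(e₂) = 0): the map ε ↦ (ε(e₁), ε ∘ inc) is a bijection from the set of augmentations of (B, ∂_B) onto F × {augmentations of (A, ∂_A)}. (This is the identification of the augmentation variety of a degree-0 stabilization, V_Aug(S A) ≅ F × V_Aug(A); for ungraded DGAs this is the degree-0 case of the paper's statement.) -/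
/-- In the stabilization setup over `F = ZMod 2`, the map
`ε ↦ (ε e₁, ε ∘ inc)` is a bijection from the set of augmentations of the
stabilization `(B, dB)` onto `F × {augmentations of (A, dA)}`: the identification
`V_Aug(S A) ≅ F × V_Aug(A)` of the augmentation variety of a degree-0
stabilization. -/
theorem stmt_18 {V : Type*} [AddCommGroup V] [Module (ZMod 2) V]
    (inc : TensorAlgebra (ZMod 2) V →ₐ[ZMod 2]
      TensorAlgebra (ZMod 2) (V × ZMod 2 × ZMod 2))
    (hinc : ∀ v : V, inc (TensorAlgebra.ι (ZMod 2) v) =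
      TensorAlgebra.ι (ZMod 2) ((v, 0, 0) : V × ZMod 2 × ZMod 2))
    (dA : TensorAlgebra (ZMod 2) V →ₗ[ZMod 2] TensorAlgebra (ZMod 2) V)
    (dB : TensorAlgebra (ZMod 2) (V × ZMod 2 × ZMod 2) →ₗ[ZMod 2]
      TensorAlgebra (ZMod 2) (V × ZMod 2 × ZMod 2))
    (hleibA : ∀ x y : TensorAlgebra (ZMod 2) V, dA (x * y) = dA x * y + x * dA y)
    (honeA : dA 1 = 0)
    (hleibB : ∀ x y : TensorAlgebra (ZMod 2) (V × ZMod 2 × ZMod 2),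
      dB (x * y) = dB x * y + x * dB y)
    (honeB : dB 1 = 0)
    (hdBinc : ∀ v : V,
      dB (TensorAlgebra.ι (ZMod 2) ((v, 0, 0) : V × ZMod 2 × ZMod 2)) =
        inc (dA (TensorAlgebra.ι (ZMod 2) v)))
    (hdBe₁ : dB (TensorAlgebra.ι (ZMod 2) ((0, 1, 0) : V × ZMod 2 × ZMod 2)) =
      TensorAlgebra.ι (ZMod 2) ((0, 0, 1) : V × ZMod 2 × ZMod 2))
    (hdBe₂ : dB (TensorAlgebra.ι (ZMod 2) ((0, 0, 1) : V × ZMod 2 × ZMod 2)) = 0) :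
    Set.BijOn
      (fun ε : TensorAlgebra (ZMod 2) (V × ZMod 2 × ZMod 2) →ₐ[ZMod 2] ZMod 2 =>
        (ε (TensorAlgebra.ι (ZMod 2) ((0, 1, 0) : V × ZMod 2 × ZMod 2)), ε.comp inc))
      {ε | ∀ y : TensorAlgebra (ZMod 2) (V × ZMod 2 × ZMod 2), ε (dB y) = 0}
      (Set.univ ×ˢ
        {ε : TensorAlgebra (ZMod 2) V →ₐ[ZMod 2] ZMod 2 |
          ∀ x : TensorAlgebra (ZMod 2) V, ε (dA x) = 0}) := by
  -- abbreviations
  have key : ∀ x, dB (inc x) = inc (dA x) := by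
    intro x
    induction x using TensorAlgebra.induction with
    | algebraMap r =>
      simp [Algebra.algebraMap_eq_smul_one, map_smul, honeB, honeA]
    | ι v => rw [hinc, hdBinc]
    | mul a b ha hb => rw [map_mul, hleibB, ha, hb, hleibA, map_add, map_mul, map_mul]
    | add a b ha hb => rw [map_add, map_add, ha, hb, map_add, map_add]
  have hιsplit : ∀ (v : V) (a b : ZMod 2),
      TensorAlgebra.ι (ZMod 2) ((v, a, b) : V × ZMod 2 × ZMod 2) =
        TensorAlgebra.ι (ZMod 2) ((v, 0, 0) : V × ZMod 2 × ZMod 2)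
        + a • TensorAlgebra.ι (ZMod 2) ((0, 1, 0) : V × ZMod 2 × ZMod 2)
        + b • TensorAlgebra.ι (ZMod 2) ((0, 0, 1) : V × ZMod 2 × ZMod 2) := by
    intro v a b
    rw [← map_smul, ← map_smul, ← map_add, ← map_add]
    congr 1
    simp [Prod.ext_iff]
  refine ⟨?_, ?_, ?_⟩
  · -- maps to
    rintro ε hε
    refine ⟨Set.mem_univ _, ?_⟩
    intro x
    simp only [AlgHom.coe_comp, Function.comp_apply]
    rw [← key, hε]
  · -- injective
    rintro ε₁ hε₁ ε₂ hε₂ h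
    have h1 : ε₁ (TensorAlgebra.ι (ZMod 2) ((0,1,0) : V × ZMod 2 × ZMod 2))
        = ε₂ (TensorAlgebra.ι (ZMod 2) ((0,1,0) : V × ZMod 2 × ZMod 2)) :=
      congrArg Prod.fst h
    have h2 : ε₁.comp inc = ε₂.comp inc := congrArg Prod.snd h
    have he₂ : ∀ ε ∈ {ε : TensorAlgebra (ZMod 2) (V × ZMod 2 × ZMod 2) →ₐ[ZMod 2] ZMod 2 |
        ∀ y, ε (dB y) = 0},
        ε (TensorAlgebra.ι (ZMod 2) ((0,0,1) : V × ZMod 2 × ZMod 2)) = 0 := by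
      intro ε hε
      rw [← hdBe₁]; exact hε _
    ext1
    apply LinearMap.ext
    rintro ⟨v, a, b⟩
    simp only [LinearMap.coe_comp, Function.comp_apply, AlgHom.toLinearMap_apply]
    rw [hιsplit v a b]
    simp only [map_add, map_smul]
    rw [h1, he₂ ε₁ hε₁, he₂ ε₂ hε₂]
    have : ε₁ (TensorAlgebra.ι (ZMod 2) ((v,0,0) : V × ZMod 2 × ZMod 2))
        = ε₂ (TensorAlgebra.ι (ZMod 2) ((v,0,0) : V × ZMod 2 × ZMod 2)) := by
      have := congrArg (fun f : TensorAlgebra (ZMod 2) V →ₐ[ZMod 2] ZMod 2 =>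
        f (TensorAlgebra.ι (ZMod 2) v)) h2
      simpa [hinc] using this
    rw [this]
  · -- surjective
    rintro ⟨t, εA⟩ ⟨-, hεA⟩
    set f : V × ZMod 2 × ZMod 2 →ₗ[ZMod 2] ZMod 2 :=
      (εA.toLinearMap.comp (TensorAlgebra.ι (ZMod 2))).comp
        (LinearMap.fst (ZMod 2) V (ZMod 2 × ZMod 2))
      + t • ((LinearMap.fst (ZMod 2) (ZMod 2) (ZMod 2)).comp
        (LinearMap.snd (ZMod 2) V (ZMod 2 × ZMod 2))) with hf
    have hfapp : ∀ (v : V) (a b : ZMod 2), f (v, a, b) = εA (TensorAlgebra.ι (ZMod 2) v) + t * a := by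
      intro v a b
      simp [hf, smul_eq_mul]
    set ε := TensorAlgebra.lift (ZMod 2) f with hε
    have hει : ∀ w, ε (TensorAlgebra.ι (ZMod 2) w) = f w := fun w =>
      TensorAlgebra.lift_ι_apply f w
    have he₁ : ε (TensorAlgebra.ι (ZMod 2) ((0,1,0) : V × ZMod 2 × ZMod 2)) = t := by
      rw [hει, hfapp]; simp
    have he₂ : ε (TensorAlgebra.ι (ZMod 2) ((0,0,1) : V × ZMod 2 × ZMod 2)) = 0 := by
      rw [hει, hfapp]; simp
    have hcomp : ε.comp inc = εA := by
      ext1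
      apply LinearMap.ext
      intro v
      simp only [LinearMap.coe_comp, Function.comp_apply, AlgHom.toLinearMap_apply,
        AlgHom.coe_comp]
      rw [hinc, hει, hfapp]
      simp
    refine ⟨ε, ?_, ?_⟩
    · intro y
      induction y using TensorAlgebra.induction with
      | algebraMap r =>
        rw [Algebra.algebraMap_eq_smul_one, map_smul, honeB, smul_zero, map_zero]
      | ι w =>
        obtain ⟨v, a, b⟩ := w
        rw [hιsplit v a b]
        simp only [map_add, map_smul, hdBe₁, hdBe₂, hdBinc, smul_zero, add_zero]
        rw [he₂, smul_zero, add_zero]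
        have : ε (inc (dA (TensorAlgebra.ι (ZMod 2) v)))
            = (ε.comp inc) (dA (TensorAlgebra.ι (ZMod 2) v)) := rfl
        rw [this, hcomp, hεA]
      | mul a b ha hb =>
        rw [hleibB, map_add, map_mul, map_mul, ha, hb, zero_mul, mul_zero, add_zero]
      | add a b ha hb => rw [map_add, map_add, ha, hb, add_zero]
    · exact Prod.ext he₁ hcomp
end

section
/- Let F = ZMod 2, let K and J be types, let color : K → Option J, and let A = FreeAlgebra F K with generators ι κ. Call κ mixed if color κ = none and pure of color j if color κ = some j. Let q : A → A be the unital algebra homomorphism with q(ι κ) = ι κ for pure κ and q(ι κ) = 0 for mixed κ, and for j ∈ J let A_j = Algebra.adjoin F {ι κ | color κ = some j}. Let ∂ : A → A be F-linear with ∂(x*y) = (∂x)*y + x*(∂y) and ∂(1) = 0. Assume: (i) q(∂(ι κ)) = 0 for every mixed κ; (ii) q(∂(ι κ)) ∈ A_j for every κ of color j; and (iii) for each j there is a unital F-algebra homomorphism ε_j : A_j → F with ε_j(q(∂(ι κ))) = 0 for every κ of color j. Then the unital algebra homomorphism ε : A → F determined by ε(ι κ) = ε_j(ι κ) for κ of color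 j (using ι κ ∈ A_j) and ε(ι κ) = 0 for mixed κ satisfies ε ∘ ∂ = 0; that is, ε is an augmentation of (A, ∂). -/
/-- The subalgebra of the free algebra generated by the generators of color `j`. -/
def pureSubalgebra {K J : Type*} (color : K → Option J) (j : J) :
    Subalgebra (ZMod 2) (FreeAlgebra (ZMod 2) K) :=
  Algebra.adjoin (ZMod 2)
    {x | ∃ κ : K, color κ = some j ∧ x = FreeAlgebra.ι (ZMod 2) κ}

/-- Augmentations of the pure sub-DGAs combine to an augmentation of the
whole DGA. Generators `κ` are colored by `color : K → Option J` (`none` = mixed,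
`some j` = pure of color `j`); `q` is the algebra endomorphism fixing pure generators
and killing mixed ones; assuming (i) `q (∂ (ι κ)) = 0` for mixed `κ`, (ii)
`q (∂ (ι κ)) ∈ A_j` for `κ` of color `j`, and (iii) each `ε_j : A_j → F` annihilates
the `q (∂ (ι κ))` for `κ` of color `j`, the algebra homomorphism `ε` determined by
`ε (ι κ) = ε_j (ι κ)` on pure generators and `ε (ι κ) = 0` on mixed generators is an
augmentation of `(A, ∂)`. -/
theorem stmt_19 {K J : Type*} (color : K → Option J)
    (q : FreeAlgebra (ZMod 2) K →ₐ[ZMod 2] FreeAlgebra (ZMod 2) K)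
    (hqpure : ∀ (κ : K) (j : J), color κ = some j →
      q (FreeAlgebra.ι (ZMod 2) κ) = FreeAlgebra.ι (ZMod 2) κ)
    (hqmixed : ∀ κ : K, color κ = none → q (FreeAlgebra.ι (ZMod 2) κ) = 0)
    (d : FreeAlgebra (ZMod 2) K →ₗ[ZMod 2] FreeAlgebra (ZMod 2) K)
    (hleib : ∀ x y : FreeAlgebra (ZMod 2) K, d (x * y) = d x * y + x * d y)
    (hone : d 1 = 0)
    (hi : ∀ κ : K, color κ = none → q (d (FreeAlgebra.ι (ZMod 2) κ)) = 0)
    (hii : ∀ (κ : K) (j : J), color κ = some j →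
      q (d (FreeAlgebra.ι (ZMod 2) κ)) ∈ pureSubalgebra color j)
    (εj : ∀ j : J, pureSubalgebra color j →ₐ[ZMod 2] ZMod 2)
    (hiii : ∀ (κ : K) (j : J), color κ = some j →
      ∀ hm : q (d (FreeAlgebra.ι (ZMod 2) κ)) ∈ pureSubalgebra color j,
        εj j ⟨q (d (FreeAlgebra.ι (ZMod 2) κ)), hm⟩ = 0)
    (ε : FreeAlgebra (ZMod 2) K →ₐ[ZMod 2] ZMod 2)
    (hεpure : ∀ (κ : K) (j : J), color κ = some j →
      ∀ hm : FreeAlgebra.ι (ZMod 2) κ ∈ pureSubalgebra color j,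
        ε (FreeAlgebra.ι (ZMod 2) κ) = εj j ⟨FreeAlgebra.ι (ZMod 2) κ, hm⟩)
    (hεmixed : ∀ κ : K, color κ = none → ε (FreeAlgebra.ι (ZMod 2) κ) = 0) :
    ∀ x : FreeAlgebra (ZMod 2) K, ε (d x) = 0 := by
  -- ε agrees with ε_j on A_j
  have hagree : ∀ (j : J) (x : FreeAlgebra (ZMod 2) K)
      (hx : x ∈ pureSubalgebra color j), ε x = εj j ⟨x, hx⟩ := by
    intro j x hx
    induction hx using Algebra.adjoin_induction with
    | mem y hy =>
      obtain ⟨κ, hκ, rfl⟩ := hy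
      exact hεpure κ j hκ _
    | algebraMap r =>
      have : (⟨algebraMap (ZMod 2) (FreeAlgebra (ZMod 2) K) r, _⟩ :
          pureSubalgebra color j) = algebraMap (ZMod 2) (pureSubalgebra color j) r := rfl
      rw [this, AlgHom.commutes, AlgHom.commutes]
    | add x y hx hy ihx ihy =>
      have : (⟨x + y, _⟩ : pureSubalgebra color j) = ⟨x, hx⟩ + ⟨y, hy⟩ := rfl
      rw [map_add, this, map_add, ihx, ihy]
    | mul x y hx hy ihx ihy =>
      have : (⟨x * y, _⟩ : pureSubalgebra color j) = ⟨x, hx⟩ * ⟨y, hy⟩ := rfl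
      rw [map_mul, this, map_mul, ihx, ihy]
  -- ε ∘ q = ε
  have hεq : ∀ x, ε (q x) = ε x := by
    intro x
    have : (ε.comp q) = ε := by
      apply FreeAlgebra.hom_ext
      funext κ
      simp only [Function.comp, AlgHom.comp_apply]
      cases hc : color κ with
      | none => rw [hqmixed κ hc, map_zero, hεmixed κ hc]
      | some j => rw [hqpure κ j hc]
    exact DFunLike.congr_fun this x
  -- ε kills d of generators
  have hgen : ∀ κ : K, ε (d (FreeAlgebra.ι (ZMod 2) κ)) = 0 := by
    intro κ
    rw [← hεq]
    cases hc : color κ with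
    | none => rw [hi κ hc, map_zero]
    | some j => rw [hagree j _ (hii κ j hc), hiii κ j hc]
  intro x
  induction x using FreeAlgebra.induction with
  | grade0 r =>
    rw [Algebra.algebraMap_eq_smul_one, map_smul, hone, smul_zero, map_zero]
  | grade1 κ => exact hgen κ
  | mul a b ha hb =>
    rw [hleib, map_add, map_mul, map_mul, ha, hb, zero_mul, mul_zero, add_zero]
  | add a b ha hb => rw [map_add, map_add, ha, hb, add_zero]
end
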